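/- Let k ≥ 1 and α₀, α₁, …, α_k ∈ ℝ with α₀ + α₁ + ⋯ + α_k = 1 and α₀ > 0. Define v(p) = ∏_{i=0}^{k} p_i^{α_i} on the set of p = (p₀,…,p_k) with all p_i > 0. Then: (a) if α₁, …, α_k ≤ 0, v is convex on {p : p ≫ 0}; (b) if α₁, …, α_k ≥ 0, v is concave; (c) if α₁, …, α_k < 0, v is strictly convex when restricted to the interior of the simplex {p ≫ 0 : Σ p_i = 1}. -/

import Mathlib

open MeasureTheory

open Finset Real in
private lemma amgm_strict {n : ℕ} (w z : Fin n → ℝ) (hw : ∀ i, 0 < w i)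
    (hw1 : ∑ i, w i = 1) (hz : ∀ i, 0 < z i) (hne : ∃ j k, z j ≠ z k) :
    ∏ i, z i ^ w i < ∑ i, w i * z i := by
  have h0 : (Finset.univ : Finset (Fin n)).Nonempty := by
    rcases Finset.univ.eq_empty_or_nonempty (α := Fin n) with h | h
    · rw [h] at hw1; simp at hw1
    · exact h
  have hs : 0 < ∑ i, w i * z i :=
    Finset.sum_pos (fun i _ => mul_pos (hw i) (hz i)) h0
  obtain ⟨j, k, hjk⟩ := hne
  have hlog := strictConcaveOn_log_Ioi.lt_map_sum (t := Finset.univ) (w := w) (p := z)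
    (fun i _ => hw i) hw1 (fun i _ => hz i) ⟨j, Finset.mem_univ j, k, Finset.mem_univ k, hjk⟩
  simp only [smul_eq_mul] at hlog
  calc ∏ i, z i ^ w i = Real.exp (∑ i, w i * Real.log (z i)) := by
        rw [Real.exp_sum]
        exact Finset.prod_congr rfl fun i _ => by
          rw [Real.rpow_def_of_pos (hz i), mul_comm]
    _ < Real.exp (Real.log (∑ i, w i * z i)) := Real.exp_lt_exp.2 hlog
    _ = _ := Real.exp_log hs


private lemma key_setup {k : ℕ} (α : Fin (k + 1) → ℝ)
    (hsum : ∑ i : Fin (k + 1), α i = 1) (hα₀ : 0 < α 0)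
    (r : Fin (k + 1) → ℝ) (hr : ∀ i, 0 < r i) :
    (∑ i : Fin (k + 1), (if i = 0 then 1 / α 0 else -α i / α 0) = 1) ∧
    (∏ i : Fin (k + 1), (if i = 0 then ∏ j : Fin (k + 1), r j ^ α j else r i) ^
        (if i = 0 then 1 / α 0 else -α i / α 0) = r 0) ∧
    (∑ i : Fin (k + 1), (if i = 0 then 1 / α 0 else -α i / α 0) *
        (if i = 0 then ∏ j : Fin (k + 1), r j ^ α j else r i)
      = ((∏ j : Fin (k + 1), r j ^ α j) - ∑ i : Fin (k + 1), α i * r i + α 0 * r 0) / α 0) := by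
  have hα₀' : α 0 ≠ 0 := hα₀.ne'
  set G := ∏ j : Fin (k + 1), r j ^ α j with hGdef
  have hG : 0 < G := Finset.prod_pos fun i _ => Real.rpow_pos_of_pos (hr i) _
  have hsucc : ∑ i : Fin k, α i.succ = 1 - α 0 := by
    rw [Fin.sum_univ_succ] at hsum; linarith
  refine ⟨?_, ?_, ?_⟩
  · rw [Fin.sum_univ_succ]
    simp only [↓reduceIte, if_neg (Fin.succ_ne_zero _)]
    rw [← Finset.sum_div, Finset.sum_neg_distrib, hsucc]
    field_simp
    ring
  · rw [Fin.prod_univ_succ]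
    simp only [↓reduceIte, if_neg (Fin.succ_ne_zero _)]
    have hGpow : G ^ (1 / α 0) = r 0 * ∏ i : Fin k, r i.succ ^ (α i.succ / α 0) := by
      rw [hGdef, ← Real.finset_prod_rpow _ _
        (fun i _ => (Real.rpow_pos_of_pos (hr i) _).le) (1 / α 0)]
      have e : ∀ i : Fin (k + 1), (r i ^ α i) ^ (1 / α 0) = r i ^ (α i / α 0) := fun i => by
        rw [← Real.rpow_mul (hr i).le, mul_one_div]
      rw [Finset.prod_congr rfl fun i _ => e i, Fin.prod_univ_succ, div_self hα₀',
        Real.rpow_one]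
    rw [hGpow, mul_assoc, ← Finset.prod_mul_distrib]
    have e : ∀ i : Fin k, r i.succ ^ (α i.succ / α 0) * r i.succ ^ (-α i.succ / α 0) = 1 :=
      fun i => by
        rw [← Real.rpow_add (hr _), neg_div, add_neg_cancel, Real.rpow_zero]
    rw [Finset.prod_congr rfl fun i _ => e i]
    simp
  · rw [Fin.sum_univ_succ]
    simp only [↓reduceIte, if_neg (Fin.succ_ne_zero _)]
    rw [Fin.sum_univ_succ (fun i => α i * r i)]
    have e : ∀ i : Fin k, -α i.succ / α 0 * r i.succ = -(α i.succ * r i.succ) / α 0 :=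
      fun i => by ring
    rw [Finset.sum_congr rfl fun i _ => e i, ← Finset.sum_div, Finset.sum_neg_distrib]
    field_simp
    ring

private lemma key_le {k : ℕ} (α : Fin (k + 1) → ℝ)
    (hsum : ∑ i : Fin (k + 1), α i = 1) (hα₀ : 0 < α 0)
    (hneg : ∀ i : Fin (k + 1), i ≠ 0 → α i ≤ 0)
    (r : Fin (k + 1) → ℝ) (hr : ∀ i, 0 < r i) :
    ∑ i : Fin (k + 1), α i * r i ≤ ∏ i : Fin (k + 1), r i ^ α i := by
  obtain ⟨hw1, hprod, hsz⟩ := key_setup α hsum hα₀ r hr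
  set G := ∏ j : Fin (k + 1), r j ^ α j with hGdef
  have hG : 0 < G := Finset.prod_pos fun i _ => Real.rpow_pos_of_pos (hr i) _
  have hAM := Real.geom_mean_le_arith_mean_weighted Finset.univ
    (fun i => if i = 0 then 1 / α 0 else -α i / α 0)
    (fun i => if i = 0 then G else r i)
    (fun i _ => by
      by_cases h : i = 0
      · simp [h]; positivity
      · simp only [if_neg h]
        exact div_nonneg (neg_nonneg.2 (hneg i h)) hα₀.le)
    hw1
    (fun i _ => by by_cases h : i = 0 <;> simp [h, hG.le, (hr i).le])
  rw [hprod, hsz, le_div_iff₀ hα₀] at hAM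
  linarith

private lemma key_lt {k : ℕ} (α : Fin (k + 1) → ℝ)
    (hsum : ∑ i : Fin (k + 1), α i = 1) (hα₀ : 0 < α 0)
    (hneg : ∀ i : Fin (k + 1), i ≠ 0 → α i < 0)
    (r : Fin (k + 1) → ℝ) (hr : ∀ i, 0 < r i) (hne : ∃ i, r i ≠ r 0) :
    ∑ i : Fin (k + 1), α i * r i < ∏ i : Fin (k + 1), r i ^ α i := by
  obtain ⟨hw1, hprod, hsz⟩ := key_setup α hsum hα₀ r hr
  set G := ∏ j : Fin (k + 1), r j ^ α j with hGdef
  have hG : 0 < G := Finset.prod_pos fun i _ => Real.rpow_pos_of_pos (hr i) _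
  have hzne : ∃ j l : Fin (k + 1), (if j = 0 then G else r j) ≠ (if l = 0 then G else r l) := by
    by_contra h
    push_neg at h
    have hri : ∀ i : Fin (k + 1), i ≠ 0 → r i = G := fun i hi => by
      have := h i 0
      simpa [if_neg hi] using this
    have hsucc : ∑ i : Fin k, α i.succ = 1 - α 0 := by
      rw [Fin.sum_univ_succ] at hsum; linarith
    have e1 : G = r 0 ^ α 0 * G ^ (1 - α 0) := by
      conv_lhs => rw [hGdef, Fin.prod_univ_succ]
      congr 1
      rw [Finset.prod_congr rfl fun i _ => by
        rw [hri i.succ (Fin.succ_ne_zero i)]]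
      rw [← Real.rpow_sum_of_pos hG, hsucc]
    have e2 : G ^ (α 0) * G ^ (1 - α 0) = r 0 ^ α 0 * G ^ (1 - α 0) := by
      rw [← Real.rpow_add hG, show α 0 + (1 - α 0) = 1 by ring, Real.rpow_one]
      exact e1
    have e3 : G ^ (α 0) = r 0 ^ α 0 :=
      mul_right_cancel₀ (ne_of_gt (Real.rpow_pos_of_pos hG _)) e2
    have e4 : G = r 0 := by
      have := congrArg (fun t => t ^ (α 0)⁻¹) e3
      simpa [Real.rpow_rpow_inv hG.le hα₀.ne', Real.rpow_rpow_inv (hr 0).le hα₀.ne'] using this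
    obtain ⟨i, hi⟩ := hne
    have hi0 : i ≠ 0 := fun h' => hi (by rw [h'])
    exact hi (by rw [hri i hi0, e4])
  have hAM := amgm_strict
    (fun i => if i = 0 then 1 / α 0 else -α i / α 0)
    (fun i => if i = 0 then G else r i)
    (fun i => by
      by_cases h : i = 0
      · simp [h]; positivity
      · simp only [if_neg h]
        exact div_pos (neg_pos.2 (hneg i h)) hα₀)
    hw1
    (fun i => by by_cases h : i = 0 <;> simp [h, hG, hr i])
    hzne
  rw [hprod, hsz, lt_div_iff₀ hα₀] at hAM
  linarith

private lemma prod_div_eq {k : ℕ} (α p m : Fin (k + 1) → ℝ)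
    (hp : ∀ i, 0 < p i) (hm : ∀ i, 0 < m i) :
    ∏ i : Fin (k + 1), (p i / m i) ^ α i
      = (∏ i : Fin (k + 1), p i ^ α i) / ∏ i : Fin (k + 1), m i ^ α i := by
  rw [← Finset.prod_div_distrib]
  exact Finset.prod_congr rfl fun i _ => Real.div_rpow (hp i).le (hm i).le (α i)

private lemma sum_ratio {k : ℕ} (α : Fin (k + 1) → ℝ) (hsum : ∑ i : Fin (k + 1), α i = 1)
    (x y m : Fin (k + 1) → ℝ) (hm : ∀ i, 0 < m i) (a b : ℝ)
    (hmdef : ∀ i, m i = a * x i + b * y i) :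
    a * (∑ i : Fin (k + 1), α i * (x i / m i)) + b * (∑ i : Fin (k + 1), α i * (y i / m i))
      = 1 := by
  rw [Finset.mul_sum, Finset.mul_sum, ← Finset.sum_add_distrib, ← hsum]
  refine Finset.sum_congr rfl fun i _ => ?_
  have h := (hm i).ne'
  field_simp
  rw [hmdef i]

/-- Let `α₀ + α₁ + ⋯ + α_k = 1` with `α₀ > 0`, and `v(p) = ∏ p_i^{α_i}` on the positive
orthant. Then (a) if `α₁, …, α_k ≤ 0`, `v` is convex; (b) if `α₁, …, α_k ≥ 0`, `v` is
concave; (c) if `α₁, …, α_k < 0`, `v` is strictly convex on the interior of the simplex. -/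
theorem stmt_19 (k : ℕ) (hk : 1 ≤ k) (α : Fin (k + 1) → ℝ)
    (hsum : ∑ i : Fin (k + 1), α i = 1) (hα₀ : 0 < α 0) :
    ((∀ i : Fin (k + 1), i ≠ 0 → α i ≤ 0) →
      ConvexOn ℝ {p : Fin (k + 1) → ℝ | ∀ i, 0 < p i}
        (fun p => ∏ i : Fin (k + 1), p i ^ α i))
    ∧ ((∀ i : Fin (k + 1), i ≠ 0 → 0 ≤ α i) →
      ConcaveOn ℝ {p : Fin (k + 1) → ℝ | ∀ i, 0 < p i}
        (fun p => ∏ i : Fin (k + 1), p i ^ α i))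
    ∧ ((∀ i : Fin (k + 1), i ≠ 0 → α i < 0) →
      StrictConvexOn ℝ
        {p : Fin (k + 1) → ℝ | (∀ i, 0 < p i) ∧ ∑ i : Fin (k + 1), p i = 1}
        (fun p => ∏ i : Fin (k + 1), p i ^ α i)) := by
  have hset : Convex ℝ {p : Fin (k + 1) → ℝ | ∀ i, 0 < p i} := by
    intro x hx y hy a b ha hb hab
    intro i
    have hxy : (a • x + b • y) i = a * x i + b * y i := rfl
    rw [Set.mem_setOf_eq] at hx hy
    show 0 < (a • x + b • y) i
    rw [hxy]
    rcases ha.eq_or_lt with h | h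
    · have hb1 : b = 1 := by linarith
      rw [← h, hb1]; simpa using hy i
    · exact add_pos_of_pos_of_nonneg (mul_pos h (hx i)) (mul_nonneg hb (hy i).le)
  refine ⟨?_, ?_, ?_⟩
  · -- (a) convex
    intro hneg
    refine ⟨hset, ?_⟩
    intro x hx y hy a b ha hb hab
    rw [Set.mem_setOf_eq] at hx hy
    rcases ha.eq_or_lt with h | ha'
    · have hb1 : b = 1 := by linarith
      rw [← h, hb1]; simp
    rcases hb.eq_or_lt with h | hb'
    · have ha1 : a = 1 := by linarith
      rw [← h, ha1]; simp
    have hmdef : ∀ i, (a • x + b • y) i = a * x i + b * y i := fun i => rfl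
    set m := a • x + b • y with hm_eq
    have hm : ∀ i, 0 < m i := fun i => by
      rw [hmdef i]
      exact add_pos (mul_pos ha' (hx i)) (mul_pos hb' (hy i))
    have hvm : 0 < ∏ i : Fin (k + 1), m i ^ α i :=
      Finset.prod_pos fun i _ => Real.rpow_pos_of_pos (hm i) _
    have hX := key_le α hsum hα₀ hneg (fun i => x i / m i)
      (fun i => div_pos (hx i) (hm i))
    have hY := key_le α hsum hα₀ hneg (fun i => y i / m i)
      (fun i => div_pos (hy i) (hm i))
    rw [prod_div_eq α x m hx hm] at hX
    rw [prod_div_eq α y m hy hm] at hY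
    have hX' : (∏ i : Fin (k + 1), m i ^ α i) * (∑ i : Fin (k + 1), α i * (x i / m i))
        ≤ ∏ i : Fin (k + 1), x i ^ α i := by
      rw [mul_comm]; exact (le_div_iff₀ hvm).1 hX
    have hY' : (∏ i : Fin (k + 1), m i ^ α i) * (∑ i : Fin (k + 1), α i * (y i / m i))
        ≤ ∏ i : Fin (k + 1), y i ^ α i := by
      rw [mul_comm]; exact (le_div_iff₀ hvm).1 hY
    have hS := sum_ratio α hsum x y m hm a b hmdef
    show ∏ i : Fin (k + 1), m i ^ α i ≤ a • (∏ i : Fin (k + 1), x i ^ α i)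
      + b • (∏ i : Fin (k + 1), y i ^ α i)
    simp only [smul_eq_mul]
    nlinarith [mul_le_mul_of_nonneg_left hX' ha'.le, mul_le_mul_of_nonneg_left hY' hb'.le]
  · -- (b) concave
    intro hpos
    refine ⟨hset, ?_⟩
    intro x hx y hy a b ha hb hab
    rw [Set.mem_setOf_eq] at hx hy
    rcases ha.eq_or_lt with h | ha'
    · have hb1 : b = 1 := by linarith
      rw [← h, hb1]; simp
    rcases hb.eq_or_lt with h | hb'
    · have ha1 : a = 1 := by linarith
      rw [← h, ha1]; simp
    have hmdef : ∀ i, (a • x + b • y) i = a * x i + b * y i := fun i => rfl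
    set m := a • x + b • y with hm_eq
    have hm : ∀ i, 0 < m i := fun i => by
      rw [hmdef i]
      exact add_pos (mul_pos ha' (hx i)) (mul_pos hb' (hy i))
    have hvm : 0 < ∏ i : Fin (k + 1), m i ^ α i :=
      Finset.prod_pos fun i _ => Real.rpow_pos_of_pos (hm i) _
    have hα : ∀ i : Fin (k + 1), 0 ≤ α i := fun i => by
      by_cases h : i = 0
      · rw [h]; exact hα₀.le
      · exact hpos i h
    have hX := Real.geom_mean_le_arith_mean_weighted Finset.univ α (fun i => x i / m i)
      (fun i _ => hα i) hsum (fun i _ => (div_pos (hx i) (hm i)).le)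
    have hY := Real.geom_mean_le_arith_mean_weighted Finset.univ α (fun i => y i / m i)
      (fun i _ => hα i) hsum (fun i _ => (div_pos (hy i) (hm i)).le)
    rw [prod_div_eq α x m hx hm] at hX
    rw [prod_div_eq α y m hy hm] at hY
    have hX' : ∏ i : Fin (k + 1), x i ^ α i
        ≤ (∏ i : Fin (k + 1), m i ^ α i) * (∑ i : Fin (k + 1), α i * (x i / m i)) := by
      rw [mul_comm]; exact (div_le_iff₀ hvm).1 hX
    have hY' : ∏ i : Fin (k + 1), y i ^ α i
        ≤ (∏ i : Fin (k + 1), m i ^ α i) * (∑ i : Fin (k + 1), α i * (y i / m i)) := by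
      rw [mul_comm]; exact (div_le_iff₀ hvm).1 hY
    have hS := sum_ratio α hsum x y m hm a b hmdef
    show a • (∏ i : Fin (k + 1), x i ^ α i) + b • (∏ i : Fin (k + 1), y i ^ α i)
      ≤ ∏ i : Fin (k + 1), m i ^ α i
    simp only [smul_eq_mul]
    nlinarith [mul_le_mul_of_nonneg_left hX' ha'.le, mul_le_mul_of_nonneg_left hY' hb'.le]
  · -- (c) strictly convex on the simplex
    intro hneg
    have hset' : Convex ℝ {p : Fin (k + 1) → ℝ | (∀ i, 0 < p i) ∧ ∑ i : Fin (k + 1), p i = 1} := by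
      intro x hx y hy a b ha hb hab
      obtain ⟨hx1, hx2⟩ := hx
      obtain ⟨hy1, hy2⟩ := hy
      constructor
      · intro i
        show 0 < a * x i + b * y i
        rcases ha.eq_or_lt with h | h
        · have hb1 : b = 1 := by linarith
          rw [← h, hb1]; simpa using hy1 i
        · exact add_pos_of_pos_of_nonneg (mul_pos h (hx1 i)) (mul_nonneg hb (hy1 i).le)
      · show ∑ i : Fin (k + 1), (a * x i + b * y i) = 1
        rw [Finset.sum_add_distrib, ← Finset.mul_sum, ← Finset.mul_sum, hx2, hy2]
        simpa using hab
    refine ⟨hset', ?_⟩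
    intro x hx y hy hxy a b ha' hb' hab
    obtain ⟨hx, hx1⟩ := hx
    obtain ⟨hy, hy1⟩ := hy
    have hmdef : ∀ i, (a • x + b • y) i = a * x i + b * y i := fun i => rfl
    set m := a • x + b • y with hm_eq
    have hm : ∀ i, 0 < m i := fun i => by
      rw [hmdef i]
      exact add_pos (mul_pos ha' (hx i)) (mul_pos hb' (hy i))
    have hm1 : ∑ i : Fin (k + 1), m i = 1 := by
      calc ∑ i : Fin (k + 1), m i = ∑ i : Fin (k + 1), (a * x i + b * y i) :=
            Finset.sum_congr rfl fun i _ => hmdef i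
        _ = 1 := by
            rw [Finset.sum_add_distrib, ← Finset.mul_sum, ← Finset.mul_sum, hx1, hy1]
            simpa using hab
    have hvm : 0 < ∏ i : Fin (k + 1), m i ^ α i :=
      Finset.prod_pos fun i _ => Real.rpow_pos_of_pos (hm i) _
    have hneg' : ∀ i : Fin (k + 1), i ≠ 0 → α i ≤ 0 := fun i hi => (hneg i hi).le
    -- the ratio x/m is non-constant
    have hrne : ∃ i, x i / m i ≠ x 0 / m 0 := by
      by_contra h
      push_neg at h
      have hxm : ∀ i, x i = (x 0 / m 0) * m i := fun i => by
        rw [← h i, div_mul_cancel₀ _ (hm i).ne']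
      have hc : x 0 / m 0 = 1 := by
        have : ∑ i : Fin (k + 1), x i = (x 0 / m 0) * ∑ i : Fin (k + 1), m i := by
          rw [Finset.mul_sum]
          exact Finset.sum_congr rfl fun i _ => hxm i
        rw [hx1, hm1, mul_one] at this
        exact this.symm
      have hxm' : ∀ i, x i = m i := fun i => by rw [hxm i, hc, one_mul]
      apply hxy
      funext i
      have hthis := hxm' i
      rw [hmdef i] at hthis
      have hbx : b * x i = b * y i := by linear_combination hthis + x i * hab
      exact mul_left_cancel₀ hb'.ne' hbx
    have hX := key_lt α hsum hα₀ hneg (fun i => x i / m i)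
      (fun i => div_pos (hx i) (hm i)) hrne
    have hY := key_le α hsum hα₀ hneg' (fun i => y i / m i)
      (fun i => div_pos (hy i) (hm i))
    rw [prod_div_eq α x m hx hm] at hX
    rw [prod_div_eq α y m hy hm] at hY
    have hX' : (∏ i : Fin (k + 1), m i ^ α i) * (∑ i : Fin (k + 1), α i * (x i / m i))
        < ∏ i : Fin (k + 1), x i ^ α i := by
      rw [mul_comm]; exact (lt_div_iff₀ hvm).1 hX
    have hY' : (∏ i : Fin (k + 1), m i ^ α i) * (∑ i : Fin (k + 1), α i * (y i / m i))
        ≤ ∏ i : Fin (k + 1), y i ^ α i := by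
      rw [mul_comm]; exact (le_div_iff₀ hvm).1 hY
    have hS := sum_ratio α hsum x y m hm a b hmdef
    show ∏ i : Fin (k + 1), m i ^ α i < a • (∏ i : Fin (k + 1), x i ^ α i)
      + b • (∏ i : Fin (k + 1), y i ^ α i)
    simp only [smul_eq_mul]
    nlinarith [mul_lt_mul_of_pos_left hX' ha', mul_le_mul_of_nonneg_left hY' hb'.le]
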